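/- Let n, p be positive integers and let q be a (not necessarily homogeneous) polynomial of degree m on ℂⁿ. Then the restriction of q to Ŝ_p is a finite sum of spherical polyharmonics of order p and degrees at most m. -/

import Mathlib

open MeasureTheory Complex Filter Finset Metric
open scoped ENNReal Topology

noncomputable section

/-- `ℂⁿ` -/
abbrev Cn (n : ℕ) := Fin n → ℂ

/-- `ℝⁿ` with the euclidean norm -/
abbrev Rn (n : ℕ) := EuclideanSpace ℝ (Fin n)

/-- embedding of `ℝⁿ` into `ℂⁿ` -/
def toC {n : ℕ} (x : Rn n) : Cn n := fun j => (x j : ℂ)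

/-- `|z|² = ∑ zⱼ²`, the complex-bilinear extension of the squared euclidean norm -/
def cnsq {n : ℕ} (z : Cn n) : ℂ := ∑ j, (z j) ^ 2

/-- the bilinear dot product `z ⬝ w = ∑ zⱼ wⱼ` -/
def cdot {n : ℕ} (z w : Cn n) : ℂ := ∑ j, z j * w j

/-- componentwise complex conjugation -/
def conjC {n : ℕ} (z : Cn n) : Cn n := fun j => (starRingEnd ℂ) (z j)

/-- the hermitian norm `‖z‖ = (∑ |zⱼ|²)^(1/2)` on `ℂⁿ` -/
def hnorm {n : ℕ} (z : Cn n) : ℝ := Real.sqrt (∑ j, ‖z j‖ ^ 2)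

/-- the principal square root `|z| = (∑ zⱼ²)^(1/2)`, complex extension of the euclidean norm -/
def cnorm {n : ℕ} (z : Cn n) : ℂ := cnsq z ^ ((1 : ℂ)/2)

/-- `Ŝ_p = ⋃_{k<p} e^{kπi/p} S`, union of rotated unit spheres -/
def Shat (n p : ℕ) : Set (Cn n) :=
  {z | ∃ k < p, ∃ x : Rn n, ‖x‖ = 1 ∧ z = Complex.exp (k * Real.pi * Complex.I / p) • toC x}

/-- `B̂_p = ⋃_{k<p} e^{kπi/p} B`, union of rotated open unit balls -/
def Bhat (n p : ℕ) : Set (Cn n) :=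
  {z | ∃ k < p, ∃ x : Rn n, ‖x‖ < 1 ∧ z = Complex.exp (k * Real.pi * Complex.I / p) • toC x}

/-- the complexified Laplacian on polynomials, `Δ = ∑ ∂²/∂xⱼ²` -/
def lapP (n : ℕ) : MvPolynomial (Fin n) ℂ →ₗ[ℂ] MvPolynomial (Fin n) ℂ :=
  ∑ j : Fin n, ((MvPolynomial.pderiv j).toLinearMap ∘ₗ (MvPolynomial.pderiv j).toLinearMap)

/-- the polynomial `|x|² = ∑ xⱼ²` -/
def nsqPoly (n : ℕ) : MvPolynomial (Fin n) ℂ := ∑ j : Fin n, (MvPolynomial.X j) ^ 2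

/-- `ℋ_m^p(ℂⁿ)`: homogeneous polynomials of degree `m` that are polyharmonic of order `p` -/
def Hmp (n m p : ℕ) : Submodule ℂ (MvPolynomial (Fin n) ℂ) :=
  MvPolynomial.homogeneousSubmodule (Fin n) ℂ m ⊓ LinearMap.ker ((lapP n) ^ p)

/-- the normalised surface-area measure `σ` on the unit sphere `S ⊂ ℝⁿ` -/
def sphMeasure (n : ℕ) : Measure (sphere (0 : Rn n) 1) :=
  ((volume : Measure (Rn n)).toSphere Set.univ)⁻¹ • (volume : Measure (Rn n)).toSphere

/-- the inner product `⟨f,g⟩_{Ŝ_p} = (1/p) ∫_S ∑_j f(e^{jπi/p}ζ) conj(g(e^{jπi/p}ζ)) dσ(ζ)` -/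
def innerShat (n p : ℕ) (f g : Cn n → ℂ) : ℂ :=
  (p : ℂ)⁻¹ * ∫ ζ : sphere (0 : Rn n) 1, ∑ j ∈ Finset.range p,
      f (Complex.exp (j * Real.pi * Complex.I / p) • toC (ζ : Rn n)) *
        (starRingEnd ℂ) (g (Complex.exp (j * Real.pi * Complex.I / p) • toC (ζ : Rn n)))
    ∂(sphMeasure n)

/-- the measure on `ℂⁿ` representing `L²(Ŝ_p)`: the average of the `p` rotated copies of `σ` -/
def muShat (n p : ℕ) : Measure (Cn n) :=
  (p : ℝ≥0∞)⁻¹ • ∑ j ∈ Finset.range p,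
    Measure.map (fun ζ : sphere (0 : Rn n) 1 =>
      Complex.exp (j * Real.pi * Complex.I / p) • toC (ζ : Rn n)) (sphMeasure n)

/-- the Poisson kernel `P_p(x,ζ) = (1-|x|^{2p})/(x²ζ̄² - 2x⬝ζ̄ + 1)^{n/2}` for `B̂_p` -/
def PoissonK (n p : ℕ) (x ζ : Cn n) : ℂ :=
  (1 - (cnsq x) ^ p) / (cnsq x * cnsq (conjC ζ) - 2 * cdot x (conjC ζ) + 1) ^ ((n : ℂ)/2)

/-- the Poisson integral `P_p[f](x) = ⟨f, P_p(·,x)⟩_{Ŝ_p}` -/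
def PInt (n p : ℕ) (f : Cn n → ℂ) (x : Cn n) : ℂ :=
  innerShat n p f (fun ζ => PoissonK n p ζ x)

/-- the complexified Laplacian, through the real parametrisation of a rotated ball -/
def lapRe (n : ℕ) (g : Rn n → ℂ) : Rn n → ℂ := fun y =>
  ∑ j : Fin n, fderiv ℝ (fun z => fderiv ℝ g z (EuclideanSpace.single j 1)) y
    (EuclideanSpace.single j 1)

/-- the `L`-functional: `L(z) = sqrt(‖z‖² + sqrt(‖z‖⁴ - |z²|²))` -/
def Lnorm {n : ℕ} (z : Cn n) : ℝ :=
  Real.sqrt (hnorm z ^ 2 + Real.sqrt (hnorm z ^ 4 - ‖cnsq z‖ ^ 2))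

/-- the Lie ball `LB` -/
def LBall (n : ℕ) : Set (Cn n) := {z | Lnorm z < 1}

/-- the Lie sphere `LS` -/
def LSphere (n : ℕ) : Set (Cn n) :=
  {z | ∃ φ : ℝ, ∃ x : Rn n, ‖x‖ = 1 ∧ z = Complex.exp (φ * Complex.I) • toC x}

/-- the Cauchy-Hua kernel `H(z,w) = (w̄²z² - 2w̄⬝z + 1)^{-n/2}` -/
def Hua (n : ℕ) (z w : Cn n) : ℂ :=
  (cnsq (conjC w) * cnsq z - 2 * cdot (conjC w) z + 1) ^ (-(n : ℂ)/2)

/-- the Gegenbauer polynomial `C_m^λ(t)` -/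
def gegen (lam : ℂ) (m : ℕ) (t : ℂ) : ℂ :=
  ∑ k ∈ Finset.range (m / 2 + 1),
    (-1) ^ k * Complex.Gamma ((m : ℂ) + lam - k) /
      ((Nat.factorial k : ℂ) * (Nat.factorial (m - 2 * k) : ℂ) * Complex.Gamma lam) *
      (2 * t) ^ (m - 2 * k)


section FischerAux

open MvPolynomial Finsupp

lemma coeff_pderiv {n : ℕ} (j : Fin n) (f : MvPolynomial (Fin n) ℂ) (s : Fin n →₀ ℕ) :
    MvPolynomial.coeff s (MvPolynomial.pderiv j f) =
      (s j + 1 : ℂ) * MvPolynomial.coeff (s + Finsupp.single j 1) f := by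
  induction f using MvPolynomial.induction_on' with
  | monomial t a =>
    rw [pderiv_monomial]
    by_cases ht : t j = 0
    · have h1 : a * (t j : ℂ) = 0 := by simp [ht]
      have h2 : t ≠ s + Finsupp.single j 1 := by
        intro h; apply absurd ht; rw [h]; simp
      simp only [coeff_monomial, h1, if_neg h2]
      simp [if_neg h2]
    · have hle : Finsupp.single j 1 ≤ t := by
        rw [Finsupp.single_le_iff]; omega
      by_cases h : t = s + Finsupp.single j 1
      · have : t - Finsupp.single j 1 = s := by rw [h]; simp
        rw [this, h]
        simp only [coeff_monomial, if_pos rfl]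
        simp [mul_comm]
      · have h2 : t - Finsupp.single j 1 ≠ s := by
          intro h3; apply h; rw [← h3, tsub_add_cancel_of_le hle]
        simp [coeff_monomial, if_neg h2, if_neg h]
  | add f g hf hg => simp [hf, hg]; ring

/-- weight for the Fischer inner product -/
def fw {n : ℕ} (s : Fin n →₀ ℕ) : ℂ := ∏ j : Fin n, ((s j).factorial : ℂ)

/-- the Fischer pairing -/
def fisch {n : ℕ} (f g : MvPolynomial (Fin n) ℂ) : ℂ :=
  ∑ s ∈ f.support, fw s * MvPolynomial.coeff s f * (starRingEnd ℂ) (MvPolynomial.coeff s g)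

lemma fisch_eq_sum {n : ℕ} (f g : MvPolynomial (Fin n) ℂ) (T : Finset (Fin n →₀ ℕ))
    (hT : f.support ⊆ T) :
    fisch f g = ∑ s ∈ T, fw s * MvPolynomial.coeff s f * (starRingEnd ℂ) (MvPolynomial.coeff s g) := by
  refine Finset.sum_subset hT fun s _ hs => ?_
  rw [MvPolynomial.notMem_support_iff.mp hs]
  ring

lemma fisch_add_left {n : ℕ} (f f' g : MvPolynomial (Fin n) ℂ) :
    fisch (f + f') g = fisch f g + fisch f' g := by
  rw [fisch_eq_sum (f + f') g (f.support ∪ f'.support ∪ (f+f').support) (by intro x hx; simp [hx]),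
    fisch_eq_sum f g (f.support ∪ f'.support ∪ (f+f').support) (by intro x hx; simp [hx]),
    fisch_eq_sum f' g (f.support ∪ f'.support ∪ (f+f').support) (by intro x hx; simp [hx]),
    ← Finset.sum_add_distrib]
  refine Finset.sum_congr rfl fun s _ => ?_
  rw [MvPolynomial.coeff_add]; ring

lemma fisch_smul_left {n : ℕ} (c : ℂ) (f g : MvPolynomial (Fin n) ℂ) :
    fisch (c • f) g = c * fisch f g := by
  rw [fisch_eq_sum (c • f) g f.support (MvPolynomial.support_smul), fisch, Finset.mul_sum]
  refine Finset.sum_congr rfl fun s _ => ?_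
  rw [MvPolynomial.coeff_smul]; simp; ring

lemma fisch_add_right {n : ℕ} (f g g' : MvPolynomial (Fin n) ℂ) :
    fisch f (g + g') = fisch f g + fisch f g' := by
  rw [fisch, fisch, fisch, ← Finset.sum_add_distrib]
  refine Finset.sum_congr rfl fun s _ => ?_
  rw [MvPolynomial.coeff_add, map_add]; ring

lemma fisch_zero_right {n : ℕ} (f : MvPolynomial (Fin n) ℂ) : fisch f 0 = 0 := by
  simp [fisch]

lemma fisch_sum_right {n : ℕ} (f : MvPolynomial (Fin n) ℂ) {ι : Type*} [DecidableEq ι] (T : Finset ι)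
    (g : ι → MvPolynomial (Fin n) ℂ) :
    fisch f (∑ i ∈ T, g i) = ∑ i ∈ T, fisch f (g i) := by
  induction T using Finset.induction_on with
  | empty => simp [fisch_zero_right]
  | insert a T' h ih => simp [Finset.sum_insert h, fisch_add_right, ih]

/-- self-pairing vanishes only at 0 -/
lemma fisch_self_eq_zero {n : ℕ} (f : MvPolynomial (Fin n) ℂ) (h : fisch f f = 0) : f = 0 := by
  by_contra hf
  have hsum : ∀ s ∈ f.support, (0:ℝ) ≤ (fw s).re * Complex.normSq (MvPolynomial.coeff s f) := by
    intro s _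
    have h1 : (0:ℝ) ≤ (fw s).re := by
      have : fw s = ((∏ j : Fin n, (s j).factorial : ℕ) : ℂ) := by simp [fw]
      rw [this]
      simp only [Complex.natCast_re]
      positivity
    exact mul_nonneg h1 (Complex.normSq_nonneg _)
  have hre : (fisch f f).re = ∑ s ∈ f.support, (fw s).re * Complex.normSq (MvPolynomial.coeff s f) := by
    rw [fisch, Complex.re_sum]
    refine Finset.sum_congr rfl fun s _ => ?_
    have : fw s * MvPolynomial.coeff s f * (starRingEnd ℂ) (MvPolynomial.coeff s f)
        = fw s * ((Complex.normSq (MvPolynomial.coeff s f) : ℝ) : ℂ) := by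
      rw [mul_assoc, Complex.mul_conj]
    rw [this]
    simp [Complex.ofReal_mul]
  obtain ⟨s, hs⟩ := (MvPolynomial.ne_zero_iff.mp hf)
  have hs' : s ∈ f.support := MvPolynomial.mem_support_iff.mpr hs
  have hpos : (0:ℝ) < (fw s).re * Complex.normSq (MvPolynomial.coeff s f) := by
    have h1 : (0:ℝ) < (fw s).re := by
      have : fw s = ((∏ j : Fin n, (s j).factorial : ℕ) : ℂ) := by simp [fw]
      rw [this]
      simp only [Complex.natCast_re]
      positivity
    have h2 : 0 < Complex.normSq (MvPolynomial.coeff s f) := Complex.normSq_pos.mpr hs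
    positivity
  have : (0:ℝ) < (fisch f f).re := by
    rw [hre]
    exact Finset.sum_pos' hsum ⟨s, hs', hpos⟩
  rw [h] at this
  simp at this

lemma fw_add_single {n : ℕ} (s : Fin n →₀ ℕ) (j : Fin n) :
    fw (s + Finsupp.single j 1) = ((s j : ℂ) + 1) * fw s := by
  unfold fw
  have hfun : (fun i => ((((s + Finsupp.single j 1 : Fin n →₀ ℕ)) i).factorial : ℂ))
      = Function.update (fun i => ((s i).factorial : ℂ)) j (((s j + 1).factorial : ℂ)) := by
    funext i
    by_cases h : i = j
    · subst h; simp
    · rw [Function.update_of_ne h]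
      simp [Finsupp.single_apply, Ne.symm h]
  rw [hfun, Finset.prod_update_of_mem (Finset.mem_univ j),
    Finset.prod_eq_mul_prod_sdiff_singleton_of_mem (Finset.mem_univ j)
      (fun i => ((s i).factorial : ℂ)), Nat.factorial_succ]
  push_cast
  ring

lemma fisch_X_mul {n : ℕ} (j : Fin n) (f g : MvPolynomial (Fin n) ℂ) :
    fisch (MvPolynomial.X j * f) g = fisch f (MvPolynomial.pderiv j g) := by
  unfold fisch
  rw [support_X_mul, Finset.sum_map]
  refine Finset.sum_congr rfl fun s hs => ?_
  have h1 : addLeftEmbedding (Finsupp.single j 1) s = Finsupp.single j 1 + s := rfl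
  rw [h1, coeff_X_mul, coeff_pderiv]
  have h2 : Finsupp.single j 1 + s = s + Finsupp.single j 1 := add_comm _ _
  rw [h2, fw_add_single, map_mul]
  have : (starRingEnd ℂ) ((s j : ℂ) + 1) = (s j : ℂ) + 1 := by
    simp
  rw [this]; ring

lemma fisch_zero_left {n : ℕ} (g : MvPolynomial (Fin n) ℂ) : fisch 0 g = 0 := by
  have := fisch_add_left 0 0 g
  simp at this
  exact this

lemma fisch_sum_left {n : ℕ} {ι : Type*} [DecidableEq ι] (T : Finset ι)
    (f : ι → MvPolynomial (Fin n) ℂ) (g : MvPolynomial (Fin n) ℂ) :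
    fisch (∑ i ∈ T, f i) g = ∑ i ∈ T, fisch (f i) g := by
  induction T using Finset.induction_on with
  | empty => simp [fisch_zero_left]
  | insert a T' h ih => simp [Finset.sum_insert h, fisch_add_left, ih]

lemma lapP_apply (n : ℕ) (f : MvPolynomial (Fin n) ℂ) :
    lapP n f = ∑ j : Fin n, MvPolynomial.pderiv j (MvPolynomial.pderiv j f) := by
  simp [lapP]

lemma fisch_nsq_mul {n : ℕ} (f g : MvPolynomial (Fin n) ℂ) :
    fisch (nsqPoly n * f) g = fisch f (lapP n g) := by
  have h1 : nsqPoly n * f = ∑ j : Fin n, MvPolynomial.X j * (MvPolynomial.X j * f) := by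
    rw [nsqPoly, Finset.sum_mul]
    refine Finset.sum_congr rfl fun j _ => by ring
  rw [h1, fisch_sum_left, lapP_apply, fisch_sum_right]
  refine Finset.sum_congr rfl fun j _ => ?_
  rw [fisch_X_mul, fisch_X_mul]

lemma fisch_nsq_pow_mul {n : ℕ} (p : ℕ) (f g : MvPolynomial (Fin n) ℂ) :
    fisch (nsqPoly n ^ p * f) g = fisch f (((lapP n) ^ p) g) := by
  induction p generalizing f g with
  | zero => simp
  | succ p ih =>
    rw [pow_succ, mul_assoc, ih (nsqPoly n * f) g, fisch_nsq_mul, pow_succ',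
      Module.End.mul_apply]

lemma nsqPoly_ne_zero {n : ℕ} (hn : 0 < n) : nsqPoly n ≠ 0 := by
  intro h
  have := congrArg (MvPolynomial.eval (fun _ : Fin n => (1:ℂ))) h
  simp [nsqPoly] at this
  exact hn.ne' this

lemma fischer_inj {n : ℕ} (hn : 0 < n) (p : ℕ) (g : MvPolynomial (Fin n) ℂ)
    (h : ((lapP n) ^ p) (nsqPoly n ^ p * g) = 0) : g = 0 := by
  have h1 : fisch (nsqPoly n ^ p * g) (nsqPoly n ^ p * g) = 0 := by
    rw [fisch_nsq_pow_mul, h, fisch_zero_right]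
  have h2 := fisch_self_eq_zero _ h1
  rcases mul_eq_zero.mp h2 with h3 | h3
  · exact absurd h3 (pow_ne_zero _ (nsqPoly_ne_zero hn))
  · exact h3

lemma weight_add_single {n : ℕ} (s : Fin n →₀ ℕ) (j : Fin n) :
    (Finsupp.weight (1 : Fin n → ℕ)) (s + Finsupp.single j 1)
      = (Finsupp.weight (1 : Fin n → ℕ)) s + 1 := by
  rw [map_add]
  congr 1
  simp [Finsupp.weight_apply, Finsupp.sum_single_index]

lemma pderiv_isHomogeneous {n : ℕ} (j : Fin n) {f : MvPolynomial (Fin n) ℂ} {d : ℕ}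
    (hf : f.IsHomogeneous (d + 1)) : (MvPolynomial.pderiv j f).IsHomogeneous d := by
  intro s hs
  rw [coeff_pderiv] at hs
  have h2 : MvPolynomial.coeff (s + Finsupp.single j 1) f ≠ 0 := by
    intro h; rw [h] at hs; simp at hs
  have h3 := hf h2
  rw [weight_add_single] at h3
  omega

lemma pderiv_eq_zero_of_isHomogeneous_zero {n : ℕ} (j : Fin n) {f : MvPolynomial (Fin n) ℂ}
    (hf : f.IsHomogeneous 0) : MvPolynomial.pderiv j f = 0 := by
  ext s
  rw [coeff_pderiv, MvPolynomial.coeff_zero]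
  by_cases h : MvPolynomial.coeff (s + Finsupp.single j 1) f = 0
  · rw [h]; ring
  · exfalso
    have := hf h
    rw [weight_add_single] at this
    omega

lemma lapP_isHomogeneous {n : ℕ} {f : MvPolynomial (Fin n) ℂ} {d : ℕ}
    (hf : f.IsHomogeneous (d + 2)) : (lapP n f).IsHomogeneous d := by
  rw [lapP_apply]
  rw [← MvPolynomial.mem_homogeneousSubmodule]
  refine Submodule.sum_mem _ fun j _ => ?_
  rw [MvPolynomial.mem_homogeneousSubmodule]
  exact pderiv_isHomogeneous j (pderiv_isHomogeneous j hf)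

lemma lapP_eq_zero_of_lt_two {n : ℕ} {f : MvPolynomial (Fin n) ℂ} {d : ℕ}
    (hf : f.IsHomogeneous d) (hd : d < 2) : lapP n f = 0 := by
  rw [lapP_apply]
  refine Finset.sum_eq_zero fun j _ => ?_
  interval_cases d
  · rw [pderiv_eq_zero_of_isHomogeneous_zero j hf]; simp
  · exact pderiv_eq_zero_of_isHomogeneous_zero j (pderiv_isHomogeneous j hf)

lemma lapP_pow_isHomogeneous {n : ℕ} (p : ℕ) {f : MvPolynomial (Fin n) ℂ} {d : ℕ}
    (hf : f.IsHomogeneous (d + 2 * p)) : (((lapP n) ^ p) f).IsHomogeneous d := by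
  induction p generalizing f with
  | zero => simpa using hf
  | succ p ih =>
    rw [pow_succ, Module.End.mul_apply]
    have h2 : f.IsHomogeneous (d + 2 * p + 2) := by
      have : d + 2 * (p + 1) = d + 2 * p + 2 := by ring
      rwa [this] at hf
    exact ih (lapP_isHomogeneous h2)

lemma lapP_pow_eq_zero {n : ℕ} (p : ℕ) {f : MvPolynomial (Fin n) ℂ} {d : ℕ}
    (hf : f.IsHomogeneous d) (hd : d < 2 * p) : ((lapP n) ^ p) f = 0 := by
  induction p generalizing f d with
  | zero => omega
  | succ p ih =>
    rw [pow_succ, Module.End.mul_apply]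
    by_cases h : d < 2
    · rw [lapP_eq_zero_of_lt_two hf h, map_zero]
    · obtain ⟨d', rfl⟩ : ∃ d', d = d' + 2 := ⟨d - 2, by omega⟩
      exact ih (lapP_isHomogeneous hf) (by omega)

instance homog_fd (n d : ℕ) : FiniteDimensional ℂ (MvPolynomial.homogeneousSubmodule (Fin n) ℂ d) := by
  have hle : MvPolynomial.homogeneousSubmodule (Fin n) ℂ d ≤
      MvPolynomial.restrictTotalDegree (Fin n) ℂ d := by
    intro f hf
    rw [MvPolynomial.mem_restrictTotalDegree]
    exact (MvPolynomial.mem_homogeneousSubmodule _ _).mp hf |>.totalDegree_le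
  exact Submodule.finiteDimensional_of_le hle

lemma nsq_isHomogeneous (n : ℕ) : (nsqPoly n).IsHomogeneous 2 := by
  rw [← MvPolynomial.mem_homogeneousSubmodule, nsqPoly]
  refine Submodule.sum_mem _ fun j _ => ?_
  rw [MvPolynomial.mem_homogeneousSubmodule]
  simpa using (MvPolynomial.isHomogeneous_X ℂ j).pow 2

lemma nsq_pow_mul_isHomogeneous {n : ℕ} (p d : ℕ) {g : MvPolynomial (Fin n) ℂ}
    (hg : g.IsHomogeneous d) : (nsqPoly n ^ p * g).IsHomogeneous (d + 2 * p) := by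
  have h1 : (nsqPoly n ^ p).IsHomogeneous (2 * p) := (nsq_isHomogeneous n).pow p
  have := h1.mul hg
  rwa [add_comm] at this

lemma decomp_exists {n : ℕ} (hn : 0 < n) (p d : ℕ) (f : MvPolynomial (Fin n) ℂ)
    (hf : f.IsHomogeneous (d + 2 * p)) :
    ∃ g : MvPolynomial (Fin n) ℂ, g.IsHomogeneous d ∧
      ((lapP n) ^ p) (nsqPoly n ^ p * g) = ((lapP n) ^ p) f := by
  set P := MvPolynomial.homogeneousSubmodule (Fin n) ℂ d
  have hmap : ∀ g : P, ((lapP n) ^ p) (nsqPoly n ^ p * (g : MvPolynomial (Fin n) ℂ)) ∈ P := by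
    intro g
    exact lapP_pow_isHomogeneous p (nsq_pow_mul_isHomogeneous p d g.2)
  let φ : P →ₗ[ℂ] P :=
    { toFun := fun g => ⟨((lapP n) ^ p) (nsqPoly n ^ p * (g : MvPolynomial (Fin n) ℂ)), hmap g⟩
      map_add' := by intro a b; ext1; simp [mul_add]
      map_smul' := by intro c a; ext1; simp [mul_smul_comm] }
  have hinj : Function.Injective φ := by
    intro a b hab
    have h1 : ((lapP n) ^ p) (nsqPoly n ^ p * ((a : MvPolynomial (Fin n) ℂ) - b)) = 0 := by
      have := congrArg (Subtype.val) hab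
      simp only [φ, LinearMap.coe_mk, AddHom.coe_mk] at this
      rw [mul_sub, map_sub, this, sub_self]
    have := fischer_inj hn p _ h1
    exact Subtype.ext (by rwa [sub_eq_zero] at this)
  have hsurj : Function.Surjective φ := (LinearMap.injective_iff_surjective).mp hinj
  have hfP : ((lapP n) ^ p) f ∈ P := lapP_pow_isHomogeneous p hf
  obtain ⟨g, hg⟩ := hsurj ⟨_, hfP⟩
  refine ⟨g, g.2, ?_⟩
  have := congrArg Subtype.val hg
  simpa [φ] using this

lemma eval_nsq_pow_on_Shat {n p : ℕ} (hp : 0 < p) {z : Cn n} (hz : z ∈ Shat n p) :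
    MvPolynomial.eval z (nsqPoly n ^ p) = 1 := by
  obtain ⟨k, hk, x, hx, rfl⟩ := hz
  have hx2 : ∑ j : Fin n, ((x j : ℂ)) ^ 2 = 1 := by
    have h1 : ∑ j : Fin n, (x j) ^ 2 = 1 := by
      have := EuclideanSpace.norm_eq x
      rw [hx] at this
      have h2 : Real.sqrt (∑ j : Fin n, ‖x j‖ ^ 2) = 1 := this.symm
      have h3 : ∑ j : Fin n, ‖x j‖ ^ 2 = 1 := by
        have hnn : (0:ℝ) ≤ ∑ j : Fin n, ‖x j‖ ^ 2 := by positivity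
        nlinarith [Real.sq_sqrt hnn]
      simpa [Real.norm_eq_abs, sq_abs] using h3
    calc ∑ j : Fin n, ((x j : ℂ)) ^ 2 = ((∑ j : Fin n, (x j)^2 : ℝ) : ℂ) := by push_cast; ring
    _ = 1 := by rw [h1]; norm_num
  have heval : MvPolynomial.eval (Complex.exp (k * Real.pi * Complex.I / p) • toC x) (nsqPoly n)
      = Complex.exp (k * Real.pi * Complex.I / p) ^ 2 := by
    rw [nsqPoly, map_sum]
    have : ∀ j : Fin n, MvPolynomial.eval (Complex.exp (k * Real.pi * Complex.I / p) • toC x)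
        (MvPolynomial.X j ^ 2) = Complex.exp (k * Real.pi * Complex.I / p) ^ 2 * (x j : ℂ)^2 := by
      intro j
      rw [map_pow, MvPolynomial.eval_X]
      show (Complex.exp (k * Real.pi * Complex.I / p) * toC x j) ^ 2 = _
      rw [toC]; ring
    rw [Finset.sum_congr rfl fun j _ => this j, ← Finset.mul_sum, hx2, mul_one]
  rw [map_pow, heval, ← pow_mul, ← Complex.exp_nat_mul]
  have harg : (↑(2 * p) : ℂ) * (k * Real.pi * Complex.I / p) = (k : ℤ) * (2 * Real.pi * Complex.I) := by
    have hp0 : (p : ℂ) ≠ 0 := Nat.cast_ne_zero.mpr hp.ne'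
    push_cast
    field_simp
  rw [harg, Complex.exp_int_mul_two_pi_mul_I]

lemma main_aux (n p : ℕ) (hn : 0 < n) (hp : 0 < p) :
    ∀ k, ∀ f : MvPolynomial (Fin n) ℂ, f.IsHomogeneous k →
    ∃ v : ℕ → MvPolynomial (Fin n) ℂ,
      (∀ i, v i ∈ Hmp n i p) ∧ (∀ i, k < i → v i = 0) ∧
      ∀ z ∈ Shat n p, MvPolynomial.eval z f = ∑ i ∈ Finset.range (k+1), MvPolynomial.eval z (v i) := by
  intro k
  induction k using Nat.strong_induction_on with
  | _ k ih =>
    intro f hf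
    by_cases hk : k < 2 * p
    · refine ⟨fun i => if i = k then f else 0, ?_, ?_, ?_⟩
      · intro i
        by_cases h : i = k
        · subst h
          simp only [if_pos rfl]
          exact ⟨hf, LinearMap.mem_ker.mpr (lapP_pow_eq_zero p hf hk)⟩
        · simp only [if_neg h]; exact Submodule.zero_mem _
      · intro i hi
        exact if_neg (by omega : ¬ i = k)
      · intro z hz
        rw [Finset.sum_congr rfl (fun i _ => apply_ite (MvPolynomial.eval z) (i = k) f 0)]
        simp [Finset.sum_ite_eq', Finset.mem_range]
    · push_neg at hk
      obtain ⟨d, rfl⟩ : ∃ d, k = d + 2 * p := ⟨k - 2*p, by omega⟩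
      obtain ⟨g, hg, hgeq⟩ := decomp_exists hn p d f hf
      set h := f - nsqPoly n ^ p * g with hh
      have hhker : ((lapP n) ^ p) h = 0 := by
        rw [hh, map_sub, hgeq, sub_self]
      have hhhom : h.IsHomogeneous (d + 2 * p) :=
        hf.sub (nsq_pow_mul_isHomogeneous p d hg)
      obtain ⟨v', hv'mem, hv'zero, hv'eq⟩ := ih d (by omega) g hg
      refine ⟨fun i => (if i = d + 2*p then h else 0) + v' i, ?_, ?_, ?_⟩
      · intro i
        refine Submodule.add_mem _ ?_ ?_
        · by_cases hik : i = d + 2*p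
          · subst hik; simp only [if_pos rfl]
            exact ⟨hhhom, LinearMap.mem_ker.mpr hhker⟩
          · simp only [if_neg hik]; exact Submodule.zero_mem _
        · exact hv'mem i
      · intro i hi
        show (if i = d + 2*p then h else 0) + v' i = 0
        rw [if_neg (by omega : ¬ i = d + 2*p), hv'zero i (by omega), add_zero]
      · intro z hz
        have hfz : MvPolynomial.eval z f
            = MvPolynomial.eval z h + MvPolynomial.eval z g := by
          rw [hh]
          have : f = h + nsqPoly n ^ p * g := by rw [hh]; ring
          conv_lhs => rw [this]
          rw [map_add, map_mul, eval_nsq_pow_on_Shat hp hz, one_mul, hh]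
        rw [hfz, hv'eq z hz]
        have hsplit : ∑ i ∈ Finset.range (d + 2*p + 1),
            MvPolynomial.eval z ((if i = d + 2*p then h else 0) + v' i)
            = (∑ i ∈ Finset.range (d + 2*p + 1),
                MvPolynomial.eval z (if i = d + 2*p then h else 0))
              + ∑ i ∈ Finset.range (d + 2*p + 1), MvPolynomial.eval z (v' i) := by
          rw [← Finset.sum_add_distrib]
          exact Finset.sum_congr rfl fun i _ => by rw [map_add]
        rw [hsplit]
        congr 1
        · rw [Finset.sum_congr rfl
            (fun i _ => apply_ite (MvPolynomial.eval z) (i = d + 2*p) h 0)]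
          simp [Finset.sum_ite_eq', Finset.mem_range]
        · refine Finset.sum_subset ?_ ?_
          · exact Finset.range_subset_range.mpr (by omega : d + 1 ≤ d + 2 * p + 1)
          · intro i hi hni
            have h1 : d < i := by
              simp only [Finset.mem_range] at hni
              omega
            rw [hv'zero i h1]
            simp

end FischerAux

/-- on `Ŝ_p`, every polynomial is a finite sum of spherical polyharmonics
of degrees at most its degree. -/
theorem poly_restriction_sum_spherical (n p m : ℕ) (hn : 0 < n) (hp : 0 < p)
    (q : MvPolynomial (Fin n) ℂ) (hq : q.totalDegree = m) :
    ∃ v : ℕ → MvPolynomial (Fin n) ℂ,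
      (∀ k, v k ∈ Hmp n k p) ∧
      ∀ z ∈ Shat n p, MvPolynomial.eval z q =
        ∑ k ∈ Finset.range (m + 1), MvPolynomial.eval z (v k) := by
  have hdecomp : (∑ k ∈ Finset.range (m + 1), MvPolynomial.homogeneousComponent k q) = q := by
    rw [← hq]
    exact MvPolynomial.sum_homogeneousComponent q
  choose V hVmem hVzero hVeq using fun k : ℕ =>
    main_aux n p hn hp k (MvPolynomial.homogeneousComponent k q)
      (MvPolynomial.homogeneousComponent_isHomogeneous k q)
  refine ⟨fun i => ∑ k ∈ Finset.range (m + 1), V k i, ?_, ?_⟩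
  · intro i
    exact Submodule.sum_mem _ fun k _ => hVmem k i
  · intro z hz
    have h1 : MvPolynomial.eval z q
        = ∑ k ∈ Finset.range (m + 1), MvPolynomial.eval z (MvPolynomial.homogeneousComponent k q) := by
      conv_lhs => rw [← hdecomp]
      rw [map_sum]
    rw [h1]
    have h2 : ∀ k ∈ Finset.range (m + 1),
        MvPolynomial.eval z (MvPolynomial.homogeneousComponent k q)
          = ∑ i ∈ Finset.range (m + 1), MvPolynomial.eval z (V k i) := by
      intro k hk
      rw [hVeq k z hz]
      refine Finset.sum_subset ?_ ?_
      · exact Finset.range_subset_range.mpr (by simp [Finset.mem_range] at hk; omega)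
      · intro i hi hni
        rw [hVzero k i (by simp [Finset.mem_range] at hni; omega)]
        simp
    rw [Finset.sum_congr rfl h2, Finset.sum_comm]
    exact Finset.sum_congr rfl fun i _ => (map_sum (MvPolynomial.eval z) _ _).symm

end
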